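/- Let G be a finite group and k a field of prime characteristic p. Then the k-vector space Hom(G,k) is nonzero if and only if G has a quotient isomorphic to a nontrivial p-group, that is, if and only if there exists a normal subgroup N of G such that G/N is a nontrivial p-group. -/

import Mathlib

lemma commutator_ne_top_of_nilpotent (P : Type*) [Group P] [Group.IsNilpotent P]
    [Nontrivial P] : commutator P ≠ ⊤ := by
  intro h
  obtain ⟨n, hn⟩ := nilpotent_iff_lowerCentralSeries.mp ‹Group.IsNilpotent P›
  have htop : ∀ m, Subgroup.lowerCentralSeries (⊤ : Subgroup P) m = ⊤ := by
    intro m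
    induction m with
    | zero => rfl
    | succ m ih =>
      rw [lowerCentralSeries_succ, ih]
      rw [← commutator_def]
      exact h
  rw [htop n] at hn
  exact absurd hn.symm bot_ne_top

lemma abelianization_nontrivial (P : Type*) [Group P] [Group.IsNilpotent P]
    [Nontrivial P] : Nontrivial (Abelianization P) := by
  by_contra h
  have hs : Subsingleton (P ⧸ commutator P) := not_nontrivial_iff_subsingleton.mp h
  exact commutator_ne_top_of_nilpotent P
    (QuotientGroup.subgroup_eq_top_of_subsingleton _ hs)

/-- Let `G` be a finite group and `k` a field of prime characteristic `p`.
Then the `k`-vector space `Hom(G, k)` of group homomorphisms from `G` to the additive group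
`(k, +)` is nonzero if and only if `G` has a quotient isomorphic to a nontrivial `p`-group,
i.e. iff there is a normal subgroup `N` of `G` such that `G/N` is a nontrivial `p`-group. -/
theorem hom_to_field_ne_zero_iff_exists_pGroup_quotient
    (p : ℕ) (hp : p.Prime)
    (k : Type*) [Field k] [CharP k p]
    (G : Type*) [Group G] [Finite G] :
    (∃ f : Additive G →+ k, f ≠ 0) ↔
      ∃ N : Subgroup G, ∃ hN : N.Normal,
        Nontrivial (G ⧸ N) ∧
          @IsPGroup p (G ⧸ N) (@QuotientGroup.Quotient.group G _ N hN) := by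
  haveI : Fact p.Prime := ⟨hp⟩
  constructor
  · rintro ⟨f, hf⟩
    obtain ⟨x, hx⟩ := DFunLike.ne_iff.mp hf
    simp only [AddMonoidHom.zero_apply] at hx
    set φ : G →* Multiplicative k := AddMonoidHom.toMultiplicativeRight f with hφ
    have hker : ∀ g : G, g ∈ φ.ker ↔ f (Additive.ofMul g) = 0 := by
      intro g
      rw [MonoidHom.mem_ker]
      show Multiplicative.ofAdd (f (Additive.ofMul g)) = 1 ↔ _
      exact ofAdd_eq_one
    refine ⟨φ.ker, inferInstance, ?_, ?_⟩
    · refine ⟨⟨QuotientGroup.mk (Additive.toMul x), 1, ?_⟩⟩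
      rw [Ne, QuotientGroup.eq_one_iff, hker]
      simpa using hx
    · intro q
      refine ⟨1, ?_⟩
      induction q using QuotientGroup.induction_on with
      | H g =>
        rw [pow_one, ← QuotientGroup.mk_pow, QuotientGroup.eq_one_iff, hker,
          ofMul_pow, map_nsmul, nsmul_eq_mul, CharP.cast_eq_zero, zero_mul]
  · rintro ⟨N, hN, hnt, hpq⟩
    haveI := hN
    haveI := hnt
    haveI : Group.IsNilpotent (G ⧸ N) := hpq.isNilpotent
    haveI := abelianization_nontrivial (G ⧸ N)
    have hpAb : IsPGroup p (Abelianization (G ⧸ N)) :=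
      hpq.of_surjective Abelianization.of (fun b =>
        Quotient.inductionOn' b fun g => ⟨g, rfl⟩)
    obtain ⟨ι, hfin, n, hn1, ⟨e⟩⟩ :=
      AddCommGroup.equiv_directSum_zmod_of_finite' (Additive (Abelianization (G ⧸ N)))
    classical
    -- find a nonzero index
    obtain ⟨a, ha⟩ := exists_ne (0 : Additive (Abelianization (G ⧸ N)))
    have hea : e a ≠ 0 := fun h => ha (by simpa using e.injective (by simpa using h))
    obtain ⟨i₀, hi₀⟩ : ∃ i, e a i ≠ 0 := by
      by_contra hc
      push_neg at hc
      exact hea (DFinsupp.ext fun i => hc i)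
    -- p divides n i₀
    have hdvd : p ∣ n i₀ := by
      set y : Additive (Abelianization (G ⧸ N)) :=
        e.symm (DirectSum.of (fun i => ZMod (n i)) i₀ 1) with hy
      have hord : addOrderOf y = n i₀ := by
        rw [hy, AddEquiv.addOrderOf_eq,
          addOrderOf_injective (DirectSum.of (fun i => ZMod (n i)) i₀)
            (DirectSum.of_injective i₀) 1]
        exact ZMod.addOrderOf_one (n i₀)
      obtain ⟨m, hm⟩ := hpAb (Additive.toMul y)
      have hsm : p ^ m • y = 0 := by
        have h2 := congrArg Additive.ofMul hm
        simpa [ofMul_pow] using h2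
      have hdd : n i₀ ∣ p ^ m := by
        rw [← hord]
        exact addOrderOf_dvd_of_nsmul_eq_zero hsm
      obtain ⟨j, _, hj⟩ := (Nat.dvd_prime_pow hp).mp hdd
      rcases j with _ | j
      · rw [pow_zero] at hj; have := hn1 i₀; omega
      · exact hj ▸ dvd_pow_self p (Nat.succ_ne_zero j)
    -- build the homomorphism
    let g1 : Additive G →+ Additive (G ⧸ N) :=
      MonoidHom.toAdditive (QuotientGroup.mk' N)
    let g2 : Additive (G ⧸ N) →+ Additive (Abelianization (G ⧸ N)) :=
      MonoidHom.toAdditive Abelianization.of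
    let g3 := e.toAddMonoidHom
    let g4 : (DirectSum ι fun i => ZMod (n i)) →+ ZMod (n i₀) :=
      (DirectSum.component ℕ ι (fun i => ZMod (n i)) i₀).toAddMonoidHom
    let g5 : ZMod (n i₀) →+ ZMod p := (ZMod.castHom hdvd (ZMod p)).toAddMonoidHom
    let g6 : ZMod p →+ k := (ZMod.castHom (dvd_refl p) k).toAddMonoidHom
    refine ⟨g6.comp (g5.comp (g4.comp (g3.comp (g2.comp g1)))), ?_⟩
    -- find an element mapping to 1 in ZMod (n i₀)
    have hsurj : Function.Surjective (g2.comp g1) := by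
      intro b
      obtain ⟨q, hq⟩ : ∃ q : G ⧸ N, Abelianization.of q = Additive.toMul b :=
        Quotient.inductionOn' (Additive.toMul b) fun q => ⟨q, rfl⟩
      obtain ⟨g, hg⟩ := QuotientGroup.mk'_surjective N q
      refine ⟨Additive.ofMul g, ?_⟩
      show Additive.ofMul (Abelianization.of (QuotientGroup.mk' N g)) = b
      rw [hg, hq]
      rfl
    obtain ⟨a₀, ha₀⟩ := hsurj (e.symm (DirectSum.of (fun i => ZMod (n i)) i₀ 1))
    intro hzero
    have : (g6.comp (g5.comp (g4.comp (g3.comp (g2.comp g1))))) a₀ = 0 := by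
      rw [hzero]; rfl
    rw [AddMonoidHom.comp_apply, AddMonoidHom.comp_apply, AddMonoidHom.comp_apply,
      AddMonoidHom.comp_apply, ha₀] at this
    have hg3 : g3 (e.symm (DirectSum.of (fun i => ZMod (n i)) i₀ 1)) =
        DirectSum.of (fun i => ZMod (n i)) i₀ 1 := e.apply_symm_apply _
    rw [hg3] at this
    have hg4 : g4 (DirectSum.of (fun i => ZMod (n i)) i₀ 1) = 1 :=
      DirectSum.component.of ℕ i₀ i₀ 1 |>.trans (by simp)
    rw [hg4] at this
    simp only [g5, g6, RingHom.toAddMonoidHom_eq_coe, AddMonoidHom.coe_coe,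
      map_one] at this
    exact one_ne_zero this
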